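/- arXiv:2406.17278 — 3 statements merged into one kernel-verified Lean document; each statement's English description precedes it below -/
import Mathlib

section
/- Let d₁, d₂ ≥ r ≥ 1, let A ∈ ℝ^{d₁×r} and B ∈ ℝ^{d₂×r} satisfy ‖AᵀA − I_r‖₂ ≤ δ and ‖BᵀB − I_r‖₂ ≤ δ. Let S_A and S_B be the positive semidefinite square roots of AᵀA and BᵀB respectively, and let U ∈ ℝ^{d₁×r}, V ∈ ℝ^{d₂×r} be matrices with UᵀU = I_r, A = U·S_A, VᵀV = I_r, B = V·S_B. Then for every matrix Q ∈ ℝ^{r×r}, ‖AQBᵀ − UQVᵀ‖₂ ≤ √2·δ·‖Q‖₂. -/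
open Matrix
open scoped RealInnerProductSpace

/-- Spectral norm (largest singular value): operator norm of the induced map
between Euclidean spaces. -/
noncomputable def specNorm {m n : Type*} [Fintype m] [Fintype n] [DecidableEq n]
    (M : Matrix m n ℝ) : ℝ :=
  ‖LinearMap.toContinuousLinearMap (Matrix.toEuclideanLin M)‖

/-- Euclidean norm of a vector. -/
noncomputable def euclNorm {n : Type*} [Fintype n] (x : n → ℝ) : ℝ :=
  Real.sqrt (∑ i, x i ^ 2)

set_option linter.unusedSectionVars false

section Plumb

variable {m n l : Type*} [Fintype m] [Fintype n] [Fintype l]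
  [DecidableEq n] [DecidableEq m] [DecidableEq l]

lemma specNorm_nonneg (M : Matrix m n ℝ) : 0 ≤ specNorm M := norm_nonneg _

lemma toEL_apply_norm_le (M : Matrix m n ℝ) (x : EuclideanSpace ℝ n) :
    ‖Matrix.toEuclideanLin M x‖ ≤ specNorm M * ‖x‖ :=
  (LinearMap.toContinuousLinearMap (Matrix.toEuclideanLin M)).le_opNorm x

lemma specNorm_le_bound (M : Matrix m n ℝ) {C : ℝ} (hC : 0 ≤ C)
    (h : ∀ x : EuclideanSpace ℝ n, ‖Matrix.toEuclideanLin M x‖ ≤ C * ‖x‖) :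
    specNorm M ≤ C :=
  ContinuousLinearMap.opNorm_le_bound _ hC (by simpa using h)

lemma toEL_mul (M : Matrix m n ℝ) (N : Matrix n l ℝ) (x : EuclideanSpace ℝ l) :
    Matrix.toEuclideanLin (M * N) x = Matrix.toEuclideanLin M (Matrix.toEuclideanLin N x) := by
  simp [Matrix.toEuclideanLin_apply, Matrix.mulVec_mulVec]

lemma toEL_sub (M N : Matrix m n ℝ) (x : EuclideanSpace ℝ n) :
    Matrix.toEuclideanLin (M - N) x = Matrix.toEuclideanLin M x - Matrix.toEuclideanLin N x := by
  rw [map_sub]; rfl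

lemma toEL_one (x : EuclideanSpace ℝ n) : Matrix.toEuclideanLin (1 : Matrix n n ℝ) x = x := by
  simp [Matrix.toEuclideanLin_apply]

lemma inner_toEL (M : Matrix m n ℝ) (x : EuclideanSpace ℝ m) (y : EuclideanSpace ℝ n) :
    ⟪x, Matrix.toEuclideanLin M y⟫ = ⟪Matrix.toEuclideanLin Mᵀ x, y⟫ := by
  simp only [PiLp.inner_apply, Matrix.toEuclideanLin_apply, RCLike.inner_apply, conj_trivial]
  change (M *ᵥ y.ofLp) ⬝ᵥ x.ofLp = y.ofLp ⬝ᵥ (Mᵀ *ᵥ x.ofLp)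
  rw [Matrix.mulVec_transpose, dotProduct_comm, Matrix.dotProduct_mulVec, dotProduct_comm]

lemma toEL_isometry (W : Matrix m n ℝ) (hW : Wᵀ * W = 1) (z : EuclideanSpace ℝ n) :
    ‖Matrix.toEuclideanLin W z‖ = ‖z‖ := by
  have h : ‖Matrix.toEuclideanLin W z‖ ^ 2 = ‖z‖ ^ 2 := by
    rw [← real_inner_self_eq_norm_sq, ← real_inner_self_eq_norm_sq]
    rw [inner_toEL, ← toEL_mul, hW, toEL_one]
  rw [← Real.sqrt_sq (norm_nonneg (Matrix.toEuclideanLin W z)), h,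
    Real.sqrt_sq (norm_nonneg z)]

lemma toEL_transpose_contract (W : Matrix m n ℝ) (hW : Wᵀ * W = 1)
    (z : EuclideanSpace ℝ m) : ‖Matrix.toEuclideanLin Wᵀ z‖ ≤ ‖z‖ := by
  set w := Matrix.toEuclideanLin Wᵀ z with hw
  have h : ‖w‖ ^ 2 ≤ ‖w‖ * ‖z‖ := by
    have h1 : ‖w‖ ^ 2 = ⟪Matrix.toEuclideanLin W w, z⟫ := by
      rw [← real_inner_self_eq_norm_sq, hw, inner_toEL, Matrix.transpose_transpose]
    calc ‖w‖ ^ 2 = ⟪Matrix.toEuclideanLin W w, z⟫ := h1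
      _ ≤ ‖Matrix.toEuclideanLin W w‖ * ‖z‖ := real_inner_le_norm _ _
      _ = ‖w‖ * ‖z‖ := by rw [toEL_isometry W hW]
  rcases eq_or_lt_of_le (norm_nonneg w) with h0 | h0
  · rw [← h0]; exact norm_nonneg z
  · nlinarith [h]

end Plumb

lemma key_bilinear {E F : Type*} [NormedAddCommGroup E] [InnerProductSpace ℝ E]
    [NormedAddCommGroup F] [InnerProductSpace ℝ F] (T : E →L[ℝ] F)
    (u x : F) (v y : E) (hx : ‖x‖ = 1) (hy : ‖y‖ = 1) :
    |⟪u, T v⟫ - ⟪x, T y⟫| ≤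
      ‖T‖ * (Real.sqrt 2 * Real.sqrt (‖u‖^2 * ‖v‖^2 - 2 * ⟪u, x⟫ * ⟪v, y⟫ + 1)) := by
  set p : ℝ := ⟪u, x⟫ with hp
  set u' : F := u - p • x with hu'
  have hT : 0 ≤ ‖T‖ := norm_nonneg _
  have hu'sq : ‖u'‖^2 = ‖u‖^2 - p^2 := by
    rw [hu', norm_sub_sq_real, real_inner_smul_right, norm_smul]
    simp [hx, ← hp]; ring
  have hid : ⟪u, T v⟫ - ⟪x, T y⟫ = ⟪x, T (p • v - y)⟫ + ⟪u', T v⟫ := by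
    rw [map_sub, T.map_smul, inner_sub_right, inner_smul_right, hu', inner_sub_left,
      real_inner_smul_left]
    ring
  set a : ℝ := ‖T (p • v - y)‖
  set b : ℝ := ‖u'‖ * ‖T v‖
  have h1 : |⟪u, T v⟫ - ⟪x, T y⟫| ≤ a + b := by
    rw [hid]
    refine (abs_add_le _ _).trans (add_le_add ?_ ?_)
    · calc |⟪x, T (p • v - y)⟫| ≤ ‖x‖ * ‖T (p • v - y)‖ := abs_real_inner_le_norm _ _
        _ = a := by rw [hx, one_mul]
    · calc |⟪u', T v⟫| ≤ ‖u'‖ * ‖T v‖ := abs_real_inner_le_norm _ _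
        _ = b := rfl
  have ha : a ≤ ‖T‖ * ‖p • v - y‖ := T.le_opNorm _
  have hb : b ≤ ‖u'‖ * (‖T‖ * ‖v‖) :=
    mul_le_mul_of_nonneg_left (T.le_opNorm _) (norm_nonneg _)
  have hc : a + b ≤ ‖T‖ * (‖p • v - y‖ + ‖u'‖ * ‖v‖) := by
    rw [mul_add]; exact add_le_add ha (by linarith [hb, mul_comm ‖u'‖ (‖T‖ * ‖v‖)])
  set c : ℝ := ‖p • v - y‖
  set d : ℝ := ‖u'‖ * ‖v‖
  have hcd : c^2 + d^2 = ‖u‖^2 * ‖v‖^2 - 2 * p * ⟪v, y⟫ + 1 := by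
    have h2 : c^2 = p^2 * ‖v‖^2 - 2 * (p * ⟪v, y⟫) + 1 := by
      rw [norm_sub_sq_real, real_inner_smul_left, norm_smul, hy]
      simp [mul_pow, sq_abs]
    have h3 : d^2 = (‖u‖^2 - p^2) * ‖v‖^2 := by rw [mul_pow, hu'sq]
    rw [h2, h3]; ring
  have hsqrt : c + d ≤ Real.sqrt 2 * Real.sqrt (c^2 + d^2) := by
    have h4 : 0 ≤ c + d := by positivity
    have h5 : (c+d)^2 ≤ 2 * (c^2 + d^2) := by nlinarith [sq_nonneg (c - d)]
    calc c + d = Real.sqrt ((c+d)^2) := (Real.sqrt_sq h4).symm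
      _ ≤ Real.sqrt (2 * (c^2+d^2)) := Real.sqrt_le_sqrt h5
      _ = Real.sqrt 2 * Real.sqrt (c^2+d^2) := Real.sqrt_mul (by norm_num) _
  calc |⟪u, T v⟫ - ⟪x, T y⟫| ≤ a + b := h1
    _ ≤ ‖T‖ * (c + d) := hc
    _ ≤ ‖T‖ * (Real.sqrt 2 * Real.sqrt (c^2 + d^2)) :=
        mul_le_mul_of_nonneg_left hsqrt hT
    _ = _ := by rw [hcd]

lemma spec_bounds {n : Type*} [Fintype n] [DecidableEq n] {S : Matrix n n ℝ} (hS : S.PosSemidef)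
    {δ : ℝ} (hδ : specNorm (S * S - 1) ≤ δ) (x : EuclideanSpace ℝ n) (hx : ‖x‖ = 1)
    {l L : ℝ} (hl : l = Real.sqrt (max 0 (1 - δ))) (hL : L = Real.sqrt (1 + δ)) :
    0 ≤ ⟪x, Matrix.toEuclideanLin S x⟫ ∧
      1 - δ ≤ ‖Matrix.toEuclideanLin S x‖^2 ∧ ‖Matrix.toEuclideanLin S x‖^2 ≤ 1 + δ ∧
      ‖Matrix.toEuclideanLin S x‖^2 + l * L ≤ (l + L) * ⟪x, Matrix.toEuclideanLin S x⟫ := by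
  have hδ0 : 0 ≤ δ := le_trans (norm_nonneg _) hδ
  have htr : Sᵀ = S := by
    rw [← Matrix.conjTranspose_eq_transpose_of_trivial]; exact hS.1
  have hsymm : ∀ z w : EuclideanSpace ℝ n,
      ⟪z, Matrix.toEuclideanLin S w⟫ = ⟪Matrix.toEuclideanLin S z, w⟫ := by
    intro z w; rw [inner_toEL, htr]
  set Sx := Matrix.toEuclideanLin S x with hSx
  have hquad : ∀ z : EuclideanSpace ℝ n, ‖z‖ = 1 →
      |⟪z, Matrix.toEuclideanLin (S*S-1) z⟫| ≤ δ := by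
    intro z hz
    calc |⟪z, Matrix.toEuclideanLin (S*S-1) z⟫|
        ≤ ‖z‖ * ‖Matrix.toEuclideanLin (S*S-1) z‖ := abs_real_inner_le_norm _ _
      _ ≤ ‖z‖ * (specNorm (S*S-1) * ‖z‖) :=
          mul_le_mul_of_nonneg_left (toEL_apply_norm_le _ _) (norm_nonneg _)
      _ ≤ δ := by rw [hz]; simpa using hδ
  have hα_eq : ‖Sx‖^2 = ⟪x, Matrix.toEuclideanLin (S*S) x⟫ := by
    rw [toEL_mul, ← hSx, hsymm x Sx, real_inner_self_eq_norm_sq]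
  have hαδ : |‖Sx‖^2 - 1| ≤ δ := by
    have h := hquad x hx
    rw [toEL_sub, toEL_one, inner_sub_right, real_inner_self_eq_norm_sq, hx] at h
    rw [hα_eq]; simpa using h
  have hα1 : 1 - δ ≤ ‖Sx‖^2 := by have := abs_le.1 hαδ; linarith [this.1]
  have hα2 : ‖Sx‖^2 ≤ 1 + δ := by have := abs_le.1 hαδ; linarith [this.2]
  have hp0 : 0 ≤ ⟪x, Sx⟫ := by
    have h := hS.dotProduct_mulVec_nonneg x.ofLp
    simpa [hSx, PiLp.inner_apply, Matrix.toEuclideanLin_apply, RCLike.inner_apply,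
      dotProduct, Matrix.mulVec, mul_comm] using h
  refine ⟨hp0, hα1, hα2, ?_⟩
  set b := hS.1.eigenvectorBasis with hb
  set ev := hS.1.eigenvalues with hev
  have hSb : ∀ i, Matrix.toEuclideanLin S (b i) = ev i • b i := by
    intro i
    have h := hS.1.mulVec_eigenvectorBasis i
    apply (WithLp.equiv 2 (n → ℝ)).injective
    simpa [Matrix.toEuclideanLin_apply] using h
  have hev0 : ∀ i, 0 ≤ ev i := fun i => hS.eigenvalues_nonneg i
  have hev2 : ∀ i, |ev i ^ 2 - 1| ≤ δ := by
    intro i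
    have h := hquad (b i) (b.orthonormal.1 i)
    have heq : Matrix.toEuclideanLin (S*S-1) (b i) = (ev i ^ 2 - 1) • b i := by
      rw [toEL_sub, toEL_mul, hSb, _root_.map_smul, hSb, toEL_one, smul_smul, sub_smul,
        one_smul, pow_two]
    rw [heq, real_inner_smul_right, real_inner_self_eq_norm_sq, b.orthonormal.1 i] at h
    simpa using h
  have hevl : ∀ i, l ≤ ev i := by
    intro i
    rw [hl, ← Real.sqrt_sq (hev0 i)]
    apply Real.sqrt_le_sqrt
    have := abs_le.1 (hev2 i)
    exact max_le (sq_nonneg _) (by linarith [this.1])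
  have hevL : ∀ i, ev i ≤ L := by
    intro i
    rw [hL, ← Real.sqrt_sq (hev0 i)]
    apply Real.sqrt_le_sqrt
    have := abs_le.1 (hev2 i)
    linarith [this.2]
  set c : n → ℝ := fun i => ⟪x, b i⟫ with hc
  have hbSx : ∀ i, ⟪b i, Sx⟫ = ev i * c i := by
    intro i
    rw [hSx, hsymm (b i) x, hSb, real_inner_smul_left, real_inner_comm]
  have hpsum : ⟪x, Sx⟫ = ∑ i, c i * (ev i * c i) := by
    rw [← b.sum_inner_mul_inner x Sx]
    exact Finset.sum_congr rfl fun i _ => by rw [hbSx]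
  have hαsum : ‖Sx‖^2 = ∑ i, (ev i * c i) * (ev i * c i) := by
    rw [← real_inner_self_eq_norm_sq, ← b.sum_inner_mul_inner Sx Sx]
    refine Finset.sum_congr rfl fun i _ => ?_
    rw [real_inner_comm (b i) Sx, hbSx i]
  have honesum : (1:ℝ) = ∑ i, c i * c i := by
    have h := b.sum_inner_mul_inner x x
    rw [real_inner_self_eq_norm_sq, hx, one_pow] at h
    rw [← h]
    exact Finset.sum_congr rfl fun i _ => by rw [real_inner_comm x (b i)]
  have hterm : ∀ i ∈ Finset.univ, 0 ≤ (l + L) * (c i * (ev i * c i)) -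
      ((ev i * c i) * (ev i * c i) + l * L * (c i * c i)) := by
    intro i _
    have h1 : 0 ≤ (ev i - l) * (L - ev i) :=
      mul_nonneg (by linarith [hevl i]) (by linarith [hevL i])
    nlinarith [sq_nonneg (c i), mul_nonneg h1 (sq_nonneg (c i))]
  have hsum := Finset.sum_nonneg hterm
  have expand : (l + L) * (∑ i, c i * (ev i * c i)) -
      ((∑ i, (ev i * c i) * (ev i * c i)) + l * L * (∑ i, c i * c i)) =
      ∑ i, ((l + L) * (c i * (ev i * c i)) -
        ((ev i * c i) * (ev i * c i) + l * L * (c i * c i))) := by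
    rw [Finset.mul_sum, Finset.mul_sum, ← Finset.sum_add_distrib, ← Finset.sum_sub_distrib]
  have h1 : l * L * (∑ i, c i * c i) = l * L := by rw [← honesum]; ring
  rw [hpsum, hαsum]
  rw [h1] at expand
  linarith [expand ▸ hsum]

lemma scalar_final {δ α β p q l L : ℝ} (hδ0 : 0 ≤ δ)
    (hl : l = Real.sqrt (max 0 (1 - δ))) (hL : L = Real.sqrt (1 + δ))
    (hα0 : 0 ≤ α) (hβ0 : 0 ≤ β)
    (hα2 : α ≤ 1 + δ) (hβ2 : β ≤ 1 + δ)
    (hα1 : 1 - δ ≤ α) (hβ1 : 1 - δ ≤ β)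
    (hp : α + l * L ≤ (l + L) * p) (hq : β + l * L ≤ (l + L) * q) :
    α * β - 2 * (p * q) + 1 ≤ δ ^ 2 := by
  have hL2 : L^2 = 1 + δ := by rw [hL]; exact Real.sq_sqrt (by linarith)
  have hL0 : 0 ≤ L := hL ▸ Real.sqrt_nonneg _
  have hl0 : 0 ≤ l := hl ▸ Real.sqrt_nonneg _
  have hw0 : 0 ≤ l * L := mul_nonneg hl0 hL0
  have hpq : (α + l*L) * (β + l*L) ≤ ((l+L)*p) * ((l+L)*q) :=
    mul_le_mul hp hq (by linarith) (le_trans (by linarith) hp)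
  rcases le_or_gt δ 1 with h1 | h1
  · have hl2 : l^2 = 1 - δ := by
      rw [hl, max_eq_right (by linarith : (0:ℝ) ≤ 1 - δ)]; exact Real.sq_sqrt (by linarith)
    have hk : (l+L)^2 = 2 + 2*(l*L) := by linear_combination hl2 + hL2
    have hpq2 : (α + l*L)*(β + l*L) ≤ (2 + 2*(l*L))*(p*q) := by
      calc (α + l*L)*(β + l*L) ≤ ((l+L)*p)*((l+L)*q) := hpq
        _ = (l+L)^2*(p*q) := by ring
        _ = (2 + 2*(l*L))*(p*q) := by rw [hk]
    have hw2 : (l*L)^2 = 1 - δ^2 := by linear_combination L^2 * hl2 + (1-δ) * hL2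
    have hab : δ^2 - (α - 1) * (β - 1) ≥ 0 := by nlinarith
    nlinarith [hpq2, mul_nonneg hw0 hab, hw0, hw2]
  · have hl2 : l = 0 := by rw [hl, max_eq_left (by linarith), Real.sqrt_zero]
    rw [hl2] at hpq
    have hαβ : α*β ≤ (1+δ)*(1+δ) := mul_le_mul hα2 hβ2 hβ0 (by linarith)
    nlinarith [hpq, hL2, hαβ, h1, hδ0]

lemma core_bound {n : Type*} [Fintype n] [DecidableEq n] {δ : ℝ}
    (SA SB Q : Matrix n n ℝ)
    (hSA : SA.PosSemidef) (hdA : specNorm (SA * SA - 1) ≤ δ)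
    (hSB : SB.PosSemidef) (hdB : specNorm (SB * SB - 1) ≤ δ) :
    specNorm (SA * Q * SB - Q) ≤ Real.sqrt 2 * δ * specNorm Q := by
  have hδ0 : 0 ≤ δ := le_trans (norm_nonneg _) hdA
  have hC : 0 ≤ Real.sqrt 2 * δ * specNorm Q :=
    mul_nonneg (mul_nonneg (Real.sqrt_nonneg 2) hδ0) (specNorm_nonneg Q)
  set l : ℝ := Real.sqrt (max 0 (1 - δ)) with hl
  set L : ℝ := Real.sqrt (1 + δ) with hL
  have hSAt : SAᵀ = SA := by
    rw [← Matrix.conjTranspose_eq_transpose_of_trivial]; exact hSA.1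
  set T := LinearMap.toContinuousLinearMap (Matrix.toEuclideanLin Q) with hT
  have hTapp : ∀ v, T v = Matrix.toEuclideanLin Q v := fun v => rfl
  have hTnorm : ‖T‖ = specNorm Q := rfl
  have hunit : ∀ y : EuclideanSpace ℝ n, ‖y‖ = 1 →
      ‖Matrix.toEuclideanLin (SA * Q * SB - Q) y‖ ≤ Real.sqrt 2 * δ * specNorm Q := by
    intro y hy
    set z := Matrix.toEuclideanLin (SA * Q * SB - Q) y with hz
    rcases eq_or_ne z 0 with h0 | h0
    · rw [h0, norm_zero]; exact hC
    · have hnz : ‖z‖ ≠ 0 := norm_ne_zero_iff.2 h0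
      set x : EuclideanSpace ℝ n := ‖z‖⁻¹ • z with hxdef
      have hx : ‖x‖ = 1 := norm_smul_inv_norm h0
      have hzx : ⟪x, z⟫ = ‖z‖ := by
        rw [hxdef, real_inner_smul_left, real_inner_self_eq_norm_sq]
        field_simp [pow_two]
      set u := Matrix.toEuclideanLin SA x with hu
      set v := Matrix.toEuclideanLin SB y with hv
      have hdecomp : ⟪x, z⟫ = ⟪u, T v⟫ - ⟪x, T y⟫ := by
        rw [hz, toEL_sub, inner_sub_right, toEL_mul, toEL_mul, hTapp, hTapp]
        rw [inner_toEL SA x, hSAt, ← hu, ← hv]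
      have hA := spec_bounds hSA hdA x hx hl hL
      have hB := spec_bounds hSB hdB y hy hl hL
      have hux : ⟪u, x⟫ = ⟪x, Matrix.toEuclideanLin SA x⟫ := by
        rw [hu, real_inner_comm]
      have hvy : ⟪v, y⟫ = ⟪y, Matrix.toEuclideanLin SB y⟫ := by
        rw [hv, real_inner_comm]
      have hR : ‖u‖^2 * ‖v‖^2 - 2 * ⟪u, x⟫ * ⟪v, y⟫ + 1 ≤ δ^2 := by
        have := scalar_final hδ0 hl hL (sq_nonneg ‖u‖) (sq_nonneg ‖v‖)
          hA.2.2.1 hB.2.2.1 hA.2.1 hB.2.1 hA.2.2.2 hB.2.2.2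
        rw [hux, hvy]
        calc ‖u‖^2 * ‖v‖^2 - 2 * ⟪x, Matrix.toEuclideanLin SA x⟫ *
              ⟪y, Matrix.toEuclideanLin SB y⟫ + 1
            = ‖u‖^2 * ‖v‖^2 - 2 * (⟪x, Matrix.toEuclideanLin SA x⟫ *
              ⟪y, Matrix.toEuclideanLin SB y⟫) + 1 := by ring
          _ ≤ δ^2 := this
      have hkey := key_bilinear T u x v y hx hy
      have hsq : Real.sqrt (‖u‖^2 * ‖v‖^2 - 2 * ⟪u, x⟫ * ⟪v, y⟫ + 1) ≤ δ := by
        calc Real.sqrt (‖u‖^2 * ‖v‖^2 - 2 * ⟪u, x⟫ * ⟪v, y⟫ + 1)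
            ≤ Real.sqrt (δ^2) := Real.sqrt_le_sqrt hR
          _ = δ := Real.sqrt_sq hδ0
      calc ‖z‖ = ⟪x, z⟫ := hzx.symm
        _ ≤ |⟪u, T v⟫ - ⟪x, T y⟫| := by rw [hdecomp]; exact le_abs_self _
        _ ≤ ‖T‖ * (Real.sqrt 2 * Real.sqrt (‖u‖^2 * ‖v‖^2 - 2 * ⟪u, x⟫ * ⟪v, y⟫ + 1)) := hkey
        _ ≤ ‖T‖ * (Real.sqrt 2 * δ) := by
            apply mul_le_mul_of_nonneg_left _ (norm_nonneg T)
            exact mul_le_mul_of_nonneg_left hsq (Real.sqrt_nonneg 2)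
        _ = Real.sqrt 2 * δ * specNorm Q := by rw [hTnorm]; ring
  apply specNorm_le_bound _ hC
  intro y
  rcases eq_or_ne y 0 with rfl | hy
  · simp
  · have hny : ‖y‖ ≠ 0 := norm_ne_zero_iff.2 hy
    set y1 : EuclideanSpace ℝ n := ‖y‖⁻¹ • y with hy1def
    have hy1 : ‖y1‖ = 1 := norm_smul_inv_norm hy
    have heq : Matrix.toEuclideanLin (SA * Q * SB - Q) y =
        ‖y‖ • Matrix.toEuclideanLin (SA * Q * SB - Q) y1 := by
      rw [hy1def, _root_.map_smul, smul_smul, mul_inv_cancel₀ hny, one_smul]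
    rw [heq, norm_smul, Real.norm_eq_abs, abs_of_nonneg (norm_nonneg y)]
    rw [mul_comm]
    exact mul_le_mul_of_nonneg_right (hunit y1 hy1) (norm_nonneg y)

theorem stmt_1 {d₁ d₂ r : ℕ} (hr : 1 ≤ r) (hrd₁ : r ≤ d₁) (hrd₂ : r ≤ d₂) {δ : ℝ}
    (A U : Matrix (Fin d₁) (Fin r) ℝ) (B V : Matrix (Fin d₂) (Fin r) ℝ)
    (SA SB : Matrix (Fin r) (Fin r) ℝ)
    (hδA : specNorm (Aᵀ * A - 1) ≤ δ) (hδB : specNorm (Bᵀ * B - 1) ≤ δ)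
    (hSApsd : SA.PosSemidef) (hSAsq : SA * SA = Aᵀ * A)
    (hSBpsd : SB.PosSemidef) (hSBsq : SB * SB = Bᵀ * B)
    (hU : Uᵀ * U = 1) (hAU : A = U * SA)
    (hV : Vᵀ * V = 1) (hBV : B = V * SB) :
    ∀ Q : Matrix (Fin r) (Fin r) ℝ,
      specNorm (A * Q * Bᵀ - U * Q * Vᵀ) ≤ Real.sqrt 2 * δ * specNorm Q := by
  intro Q
  have hdA : specNorm (SA * SA - 1) ≤ δ := by rw [hSAsq]; exact hδA
  have hdB : specNorm (SB * SB - 1) ≤ δ := by rw [hSBsq]; exact hδB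
  have hSBt : SBᵀ = SB := by
    rw [← Matrix.conjTranspose_eq_transpose_of_trivial]; exact hSBpsd.1
  set N := SA * Q * SB - Q with hN
  have hfact : A * Q * Bᵀ - U * Q * Vᵀ = U * N * Vᵀ := by
    rw [hN, hAU, hBV, Matrix.transpose_mul, hSBt]
    simp only [Matrix.mul_sub, Matrix.sub_mul, Matrix.mul_assoc]
  have houter : specNorm (U * N * Vᵀ) ≤ specNorm N := by
    apply specNorm_le_bound _ (specNorm_nonneg N)
    intro y
    rw [toEL_mul, toEL_mul, toEL_isometry U hU]
    calc ‖Matrix.toEuclideanLin N (Matrix.toEuclideanLin Vᵀ y)‖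
        ≤ specNorm N * ‖Matrix.toEuclideanLin Vᵀ y‖ := toEL_apply_norm_le _ _
      _ ≤ specNorm N * ‖y‖ :=
          mul_le_mul_of_nonneg_left (toEL_transpose_contract V hV y) (specNorm_nonneg N)
  calc specNorm (A * Q * Bᵀ - U * Q * Vᵀ) = specNorm (U * N * Vᵀ) := by rw [hfact]
    _ ≤ specNorm N := houter
    _ ≤ Real.sqrt 2 * δ * specNorm Q := core_bound SA SB Q hSApsd hdA hSBpsd hdB
end

section
/- Let A, Â ∈ ℝ^{d×r} with columns a₁,…,a_r and â₁,…,â_r. Assume ‖AᵀA − I_r‖₂ ≤ δ, that ‖â_j − a_j‖₂ ≤ ε for every j, and that √(1−δ) − √r·ε > 0. Then ÂᵀÂ is invertible and ‖Â(ÂᵀÂ)^{-1}‖₂ ≤ ( √(1−δ) − √r·ε )^{-1}; in particular every column b̂_j of B̂ = Â(ÂᵀÂ)^{-1} satisfies ‖b̂_j‖₂ ≤ ( √(1−δ) − √r·ε )^{-1}. -/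
open Matrix

noncomputable def toE' {n : Type*} (x : n → ℝ) : EuclideanSpace ℝ n :=
  (WithLp.equiv 2 (n → ℝ)).symm x

lemma euclNorm_eq_norm' {n : Type*} [Fintype n] (x : n → ℝ) : euclNorm x = ‖toE' x‖ := by
  simp [euclNorm, toE', EuclideanSpace.norm_eq, Real.norm_eq_abs, sq_abs]

lemma euclNorm_nonneg' {n : Type*} [Fintype n] (x : n → ℝ) : 0 ≤ euclNorm x :=
  Real.sqrt_nonneg _

lemma euclNorm_eq_zero' {n : Type*} [Fintype n] {x : n → ℝ} (h : euclNorm x = 0) : x = 0 := by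
  rw [euclNorm_eq_norm'] at h
  have : toE' x = 0 := norm_eq_zero.mp h
  simpa [toE'] using congrArg (WithLp.equiv 2 (n → ℝ)) this

lemma sq_euclNorm' {n : Type*} [Fintype n] (x : n → ℝ) : euclNorm x ^ 2 = x ⬝ᵥ x := by
  rw [euclNorm, Real.sq_sqrt (by positivity)]
  simp [dotProduct, sq]

lemma inner_toE' {n : Type*} [Fintype n] (x y : n → ℝ) :
    (inner ℝ (toE' x) (toE' y) : ℝ) = x ⬝ᵥ y := by
  simp [toE', PiLp.inner_apply, dotProduct, mul_comm]

lemma abs_dot_le' {n : Type*} [Fintype n] (x y : n → ℝ) :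
    |x ⬝ᵥ y| ≤ euclNorm x * euclNorm y := by
  rw [← inner_toE', euclNorm_eq_norm', euclNorm_eq_norm']
  exact abs_real_inner_le_norm _ _

lemma specNorm_mulVec_le' {m n : Type*} [Fintype m] [Fintype n] [DecidableEq n]
    (M : Matrix m n ℝ) (x : n → ℝ) :
    euclNorm (M *ᵥ x) ≤ specNorm M * euclNorm x := by
  rw [euclNorm_eq_norm', euclNorm_eq_norm']
  have := (LinearMap.toContinuousLinearMap (Matrix.toEuclideanLin M)).le_opNorm (toE' x)
  simpa [toE', specNorm, Matrix.toEuclideanLin_toLp] using this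

lemma specNorm_le_of_forall' {m n : Type*} [Fintype m] [Fintype n] [DecidableEq n]
    (M : Matrix m n ℝ) {C : ℝ} (hC : 0 ≤ C)
    (h : ∀ x : n → ℝ, euclNorm (M *ᵥ x) ≤ C * euclNorm x) : specNorm M ≤ C := by
  apply ContinuousLinearMap.opNorm_le_bound _ hC
  intro y
  have h2 := h (WithLp.equiv 2 (n → ℝ) y)
  rw [euclNorm_eq_norm', euclNorm_eq_norm'] at h2
  simpa [toE', Matrix.toEuclideanLin_apply] using h2

lemma mulVec_dot' {d r : ℕ} (M : Matrix (Fin d) (Fin r) ℝ) (x y : Fin r → ℝ) :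
    (M *ᵥ x) ⬝ᵥ (M *ᵥ y) = x ⬝ᵥ ((Mᵀ * M) *ᵥ y) := by
  rw [← Matrix.mulVec_mulVec, Matrix.dotProduct_mulVec x, Matrix.vecMul_transpose]

lemma mulVec_norm_le_sum' {d r : ℕ} (M : Matrix (Fin d) (Fin r) ℝ) (x : Fin r → ℝ) :
    euclNorm (M *ᵥ x) ≤ ∑ j, |x j| * euclNorm (fun i => M i j) := by
  have hfun : (M *ᵥ x) = ∑ j, x j • (fun i => M i j) := by
    funext i
    simp only [Matrix.mulVec, dotProduct, Finset.sum_apply, Pi.smul_apply, smul_eq_mul]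
    exact Finset.sum_congr rfl fun j _ => mul_comm _ _
  have hdecomp : toE' (M *ᵥ x) = ∑ j, x j • toE' (fun i => M i j) := by
    rw [hfun, show (toE' : (Fin d → ℝ) → _) = ⇑(WithLp.linearEquiv 2 ℝ (Fin d → ℝ)).symm from rfl,
      map_sum]
    simp
  calc euclNorm (M *ᵥ x) = ‖toE' (M *ᵥ x)‖ := euclNorm_eq_norm' _
    _ = ‖∑ j, x j • toE' (fun i => M i j)‖ := by rw [hdecomp]
    _ ≤ ∑ j, ‖x j • toE' (fun i => M i j)‖ := norm_sum_le _ _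
    _ = ∑ j, |x j| * euclNorm (fun i => M i j) := by
        refine Finset.sum_congr rfl fun j _ => ?_
        rw [norm_smul, Real.norm_eq_abs, euclNorm_eq_norm']

lemma sum_abs_le_sqrt' {r : ℕ} (x : Fin r → ℝ) :
    ∑ j, |x j| ≤ Real.sqrt (r : ℝ) * euclNorm x := by
  have h := abs_dot_le' (fun j => |x j|) (fun _ => (1 : ℝ))
  have h1 : (fun j => |x j|) ⬝ᵥ (fun _ => (1 : ℝ)) = ∑ j, |x j| := by
    simp [dotProduct]
  have h2 : euclNorm (fun j => |x j|) = euclNorm x := by simp [euclNorm, sq_abs]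
  have h3 : euclNorm (fun _ : Fin r => (1 : ℝ)) = Real.sqrt (r : ℝ) := by
    simp [euclNorm]
  rw [h1, h2, h3] at h
  rw [mul_comm] at h
  exact le_trans (le_abs_self _) h

theorem stmt_5 {d r : ℕ} {δ ε : ℝ}
    (A Ahat : Matrix (Fin d) (Fin r) ℝ)
    (hδ : specNorm (Aᵀ * A - 1) ≤ δ)
    (hε : ∀ j, euclNorm (fun i => Ahat i j - A i j) ≤ ε)
    (hpos : 0 < Real.sqrt (1 - δ) - Real.sqrt (r : ℝ) * ε) :
    IsUnit (Ahatᵀ * Ahat) ∧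
      specNorm (Ahat * (Ahatᵀ * Ahat)⁻¹) ≤ (Real.sqrt (1 - δ) - Real.sqrt (r : ℝ) * ε)⁻¹ ∧
      ∀ j, euclNorm (fun i => (Ahat * (Ahatᵀ * Ahat)⁻¹) i j)
        ≤ (Real.sqrt (1 - δ) - Real.sqrt (r : ℝ) * ε)⁻¹ := by
  set c := Real.sqrt (1 - δ) - Real.sqrt (r : ℝ) * ε with hc
  have hc0 : 0 < c := hpos
  -- lower bound for A
  have hA : ∀ x : Fin r → ℝ, Real.sqrt (1 - δ) * euclNorm x ≤ euclNorm (A *ᵥ x) := by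
    intro x
    have key : (1 - δ) * euclNorm x ^ 2 ≤ euclNorm (A *ᵥ x) ^ 2 := by
      have h1 : euclNorm (A *ᵥ x) ^ 2 = x ⬝ᵥ x + x ⬝ᵥ ((Aᵀ * A - 1) *ᵥ x) := by
        rw [sq_euclNorm', mulVec_dot']
        have : (Aᵀ * A) *ᵥ x = x + (Aᵀ * A - 1) *ᵥ x := by
          rw [Matrix.sub_mulVec, Matrix.one_mulVec]; abel
        rw [this, dotProduct_add]
      have h2 : |x ⬝ᵥ ((Aᵀ * A - 1) *ᵥ x)| ≤ δ * euclNorm x ^ 2 := by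
        calc |x ⬝ᵥ ((Aᵀ * A - 1) *ᵥ x)| ≤ euclNorm x * euclNorm ((Aᵀ * A - 1) *ᵥ x) :=
              abs_dot_le' _ _
          _ ≤ euclNorm x * (specNorm (Aᵀ * A - 1) * euclNorm x) := by
              gcongr
              · exact euclNorm_nonneg' _
              · exact specNorm_mulVec_le' _ _
          _ ≤ euclNorm x * (δ * euclNorm x) := by
              gcongr
              · exact euclNorm_nonneg' _
              · exact euclNorm_nonneg' _
          _ = δ * euclNorm x ^ 2 := by ring
      have h3 : euclNorm x ^ 2 = x ⬝ᵥ x := sq_euclNorm' x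
      nlinarith [abs_le.mp h2]
    calc Real.sqrt (1 - δ) * euclNorm x
        = Real.sqrt ((1 - δ) * euclNorm x ^ 2) := by
          rw [Real.sqrt_mul' _ (by positivity), Real.sqrt_sq (euclNorm_nonneg' x)]
      _ ≤ Real.sqrt (euclNorm (A *ᵥ x) ^ 2) := Real.sqrt_le_sqrt key
      _ = euclNorm (A *ᵥ x) := Real.sqrt_sq (euclNorm_nonneg' _)
  -- perturbation bound
  have hpert : ∀ x : Fin r → ℝ,
      euclNorm ((Ahat - A) *ᵥ x) ≤ Real.sqrt (r : ℝ) * ε * euclNorm x := by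
    intro x
    rcases Nat.eq_zero_or_pos r with hr | hr
    · subst hr
      simp [euclNorm, Matrix.mulVec, dotProduct]
    · have hε0 : 0 ≤ ε := le_trans (euclNorm_nonneg' _) (hε ⟨0, hr⟩)
      calc euclNorm ((Ahat - A) *ᵥ x)
          ≤ ∑ j, |x j| * euclNorm (fun i => (Ahat - A) i j) := mulVec_norm_le_sum' _ _
        _ ≤ ∑ j, |x j| * ε := by
            apply Finset.sum_le_sum
            intro j _
            exact mul_le_mul_of_nonneg_left (by simpa [Matrix.sub_apply] using hε j)
              (abs_nonneg _)
        _ = (∑ j, |x j|) * ε := by rw [Finset.sum_mul]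
        _ ≤ (Real.sqrt (r : ℝ) * euclNorm x) * ε := by
            gcongr
            exact sum_abs_le_sqrt' x
        _ = Real.sqrt (r : ℝ) * ε * euclNorm x := by ring
  -- lower bound for Ahat
  have hAhat : ∀ x : Fin r → ℝ, c * euclNorm x ≤ euclNorm (Ahat *ᵥ x) := by
    intro x
    have hsplit : A *ᵥ x = Ahat *ᵥ x - (Ahat - A) *ᵥ x := by
      rw [Matrix.sub_mulVec]; abel
    have htri : euclNorm (A *ᵥ x) ≤ euclNorm (Ahat *ᵥ x) + euclNorm ((Ahat - A) *ᵥ x) := by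
      rw [hsplit, euclNorm_eq_norm', euclNorm_eq_norm', euclNorm_eq_norm']
      have : toE' (Ahat *ᵥ x - (Ahat - A) *ᵥ x) = toE' (Ahat *ᵥ x) - toE' ((Ahat - A) *ᵥ x) :=
        rfl
      rw [this]
      exact norm_sub_le _ _
    have hcx : c * euclNorm x
        = Real.sqrt (1 - δ) * euclNorm x - Real.sqrt (r : ℝ) * ε * euclNorm x := by
      rw [hc]; ring
    linarith [hA x, hpert x]
  -- injectivity
  have hker : ∀ z : Fin r → ℝ, Ahat *ᵥ z = 0 → z = 0 := by
    intro z hz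
    have := hAhat z
    rw [hz] at this
    have h0 : euclNorm (0 : Fin d → ℝ) = 0 := by simp [euclNorm]
    have : euclNorm z = 0 :=
      le_antisymm (by nlinarith [euclNorm_nonneg' z]) (euclNorm_nonneg' z)
    exact euclNorm_eq_zero' this
  have hSinj : Function.Injective ((Ahatᵀ * Ahat).mulVec) := by
    intro u v huv
    have hz : (Ahatᵀ * Ahat) *ᵥ (u - v) = 0 := by rw [Matrix.mulVec_sub, huv, sub_self]
    have h2 : euclNorm (Ahat *ᵥ (u - v)) ^ 2 = 0 := by
      rw [sq_euclNorm', mulVec_dot', hz, dotProduct_zero]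
    have h3 : euclNorm (Ahat *ᵥ (u - v)) = 0 := by
      exact pow_eq_zero_iff (by norm_num) |>.mp h2
    have h4 : Ahat *ᵥ (u - v) = 0 := by
      have := (euclNorm_eq_norm' (Ahat *ᵥ (u - v))) ▸ h3
      have h5 : toE' (Ahat *ᵥ (u - v)) = 0 := norm_eq_zero.mp this
      simpa [toE'] using congrArg (WithLp.equiv 2 (Fin d → ℝ)) h5
    have := hker _ h4
    exact sub_eq_zero.mp this
  have hUnit : IsUnit (Ahatᵀ * Ahat) := Matrix.mulVec_injective_iff_isUnit.mp hSinj
  have hSinv : (Ahatᵀ * Ahat) * (Ahatᵀ * Ahat)⁻¹ = 1 :=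
    Matrix.mul_nonsing_inv _ ((Matrix.isUnit_iff_isUnit_det _).mp hUnit)
  -- operator bound for B
  have hB : ∀ y : Fin r → ℝ,
      euclNorm ((Ahat * (Ahatᵀ * Ahat)⁻¹) *ᵥ y) ≤ c⁻¹ * euclNorm y := by
    intro y
    set x := (Ahatᵀ * Ahat)⁻¹ *ᵥ y with hx
    have hBy : (Ahat * (Ahatᵀ * Ahat)⁻¹) *ᵥ y = Ahat *ᵥ x := by
      rw [hx, Matrix.mulVec_mulVec]
    have hy : (Ahatᵀ * Ahat) *ᵥ x = y := by
      rw [hx, Matrix.mulVec_mulVec, hSinv, Matrix.one_mulVec]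
    rw [hBy]
    set t := euclNorm (Ahat *ᵥ x) with ht
    have ht0 : 0 ≤ t := euclNorm_nonneg' _
    have ht2 : t ^ 2 = x ⬝ᵥ y := by rw [ht, sq_euclNorm', mulVec_dot', hy]
    have hcs : x ⬝ᵥ y ≤ euclNorm x * euclNorm y := le_trans (le_abs_self _) (abs_dot_le' _ _)
    have hxt : c * euclNorm x ≤ t := hAhat x
    rcases eq_or_lt_of_le ht0 with h | h
    · rw [← h]; exact mul_nonneg (inv_nonneg.mpr hc0.le) (euclNorm_nonneg' y)
    · have h6 : c * t ^ 2 ≤ t * euclNorm y := by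
        calc c * t ^ 2 = c * (t ^ 2) := rfl
          _ ≤ c * (euclNorm x * euclNorm y) := by
              apply mul_le_mul_of_nonneg_left _ hc0.le
              rw [ht2]; exact hcs
          _ = (c * euclNorm x) * euclNorm y := by ring
          _ ≤ t * euclNorm y := mul_le_mul_of_nonneg_right hxt (euclNorm_nonneg' y)
      have h7 : c * t ≤ euclNorm y := by
        have := (mul_le_mul_iff_of_pos_right h).mp (by nlinarith : (c * t) * t ≤ euclNorm y * t)
        exact this
      calc t = c⁻¹ * (c * t) := by field_simp
        _ ≤ c⁻¹ * euclNorm y := mul_le_mul_of_nonneg_left h7 (inv_nonneg.mpr hc0.le)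
  have hspec : specNorm (Ahat * (Ahatᵀ * Ahat)⁻¹) ≤ c⁻¹ :=
    specNorm_le_of_forall' _ (inv_nonneg.mpr hc0.le) hB
  refine ⟨hUnit, hspec, ?_⟩
  intro j
  have hcol : (fun i => (Ahat * (Ahatᵀ * Ahat)⁻¹) i j)
      = (Ahat * (Ahatᵀ * Ahat)⁻¹) *ᵥ Pi.single j 1 := by
    funext i; simp [Matrix.mulVec_single]
  have hone : euclNorm (Pi.single j (1 : ℝ) : Fin r → ℝ) = 1 := by
    rw [euclNorm]
    have : ∑ i, (Pi.single j (1 : ℝ) : Fin r → ℝ) i ^ 2 = 1 := by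
      rw [Finset.sum_eq_single j]
      · simp
      · intro b _ hb; simp [Pi.single_apply, hb]
      · intro h; exact absurd (Finset.mem_univ j) h
    rw [this, Real.sqrt_one]
  calc euclNorm (fun i => (Ahat * (Ahatᵀ * Ahat)⁻¹) i j)
      = euclNorm ((Ahat * (Ahatᵀ * Ahat)⁻¹) *ᵥ Pi.single j 1) := by rw [hcol]
    _ ≤ c⁻¹ * euclNorm (Pi.single j (1 : ℝ) : Fin r → ℝ) := hB _
    _ = c⁻¹ := by rw [hone, mul_one]
end

section
/- Let ξ₁, …, ξ_p be independent real random variables on a probability space, each satisfying E[ξᵢ] = 0, E[ξᵢ²] = 1, and E[ξᵢ⁴] ≤ κ (in particular each ξᵢ has finite fourth moment). Then for every matrix M ∈ ℝ^{p×p}, E[ ( Σ_{j,l=1}^{p} M_{jl} ξ_j ξ_l )² ] ≤ (κ + 2)·‖M‖_F² + (tr M)². -/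
open Matrix

/-- Frobenius norm of a matrix. -/
noncomputable def frobNorm {m n : Type*} [Fintype m] [Fintype n] (M : Matrix m n ℝ) : ℝ :=
  Real.sqrt (∑ i, ∑ j, M i j ^ 2)

open MeasureTheory ProbabilityTheory


lemma my_prod_int {Ω : Type*} [MeasurableSpace Ω] {μ : Measure Ω}
    [IsProbabilityMeasure μ] {ι : Type*} {f : ι → Ω → ℝ}
    (hindep : iIndepFun f μ) (hmeas : ∀ i, Measurable (f i))
    (hint : ∀ i, Integrable (f i) μ) (s : Finset ι) :
    Integrable (fun ω => ∏ i ∈ s, f i ω) μ ∧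
      ∫ ω, ∏ i ∈ s, f i ω ∂μ = ∏ i ∈ s, ∫ ω, f i ω ∂μ := by
  classical
  induction s using Finset.induction_on with
  | empty => simp
  | @insert a s ha ih =>
    have hIF : IndepFun (∏ j ∈ s, f j) (f a) μ :=
      hindep.indepFun_finsetProd_of_notMem hmeas ha
    have hps : (∏ j ∈ s, f j) = fun ω => ∏ j ∈ s, f j ω := by
      funext ω; simp
    rw [hps] at hIF
    have hintp := hIF.integrable_mul ih.1 (hint a)
    have h1 : Integrable (fun ω => ∏ i ∈ insert a s, f i ω) μ := by
      have : (fun ω => ∏ i ∈ insert a s, f i ω)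
          = (fun ω => ∏ j ∈ s, f j ω) * (f a) := by
        funext ω; simp [Finset.prod_insert ha, mul_comm]
      rw [this]; exact hintp
    refine ⟨h1, ?_⟩
    have h2 := hIF.integral_fun_mul_eq_mul_integral ih.1.aestronglyMeasurable
      (hint a).aestronglyMeasurable
    calc ∫ ω, ∏ i ∈ insert a s, f i ω ∂μ
        = ∫ ω, (∏ j ∈ s, f j ω) * f a ω ∂μ := by
          congr 1; funext ω; simp [Finset.prod_insert ha, mul_comm]
      _ = (∫ ω, ∏ j ∈ s, f j ω ∂μ) * ∫ ω, f a ω ∂μ := h2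
      _ = ∏ i ∈ insert a s, ∫ ω, f i ω ∂μ := by
          rw [Finset.prod_insert ha, ih.2, mul_comm]


lemma my_abs_pow_le (x : ℝ) {k : ℕ} (hk : k ≤ 4) : ‖x ^ k‖ ≤ ‖1 + x ^ 4‖ := by
  have h4 : (0:ℝ) ≤ x ^ 4 := by positivity
  rw [Real.norm_eq_abs, Real.norm_eq_abs, abs_pow,
    abs_of_nonneg (by linarith : (0:ℝ) ≤ 1 + x ^ 4)]
  rcases le_total |x| 1 with h | h
  · have := pow_le_one₀ (abs_nonneg x) h (n := k)
    linarith
  · have h1 : |x| ^ k ≤ |x| ^ 4 := pow_le_pow_right₀ h hk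
    have h2 : |x| ^ 4 = x ^ 4 := by rw [← abs_pow, abs_of_nonneg h4]
    linarith

lemma my_int_pow {Ω : Type*} [MeasurableSpace Ω] {μ : Measure Ω}
    [IsProbabilityMeasure μ] {g : Ω → ℝ} (hm : Measurable g)
    (h4 : Integrable (fun ω => g ω ^ 4) μ) {k : ℕ} (hk : k ≤ 4) :
    Integrable (fun ω => g ω ^ k) μ := by
  refine Integrable.mono ((integrable_const 1).add h4) ((hm.pow_const k).aestronglyMeasurable) ?_
  exact ae_of_all _ fun ω => my_abs_pow_le (g ω) hk

lemma my_quad {Ω : Type*} [MeasurableSpace Ω] {μ : Measure Ω}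
    [IsProbabilityMeasure μ] {p : ℕ} {ξ : Fin p → Ω → ℝ}
    (hmeas : ∀ i, Measurable (ξ i))
    (hindep : iIndepFun ξ μ)
    (hint : ∀ i, Integrable (fun ω => ξ i ω ^ 4) μ)
    (hmean : ∀ i, ∫ ω, ξ i ω ∂μ = 0)
    (hvar : ∀ i, ∫ ω, ξ i ω ^ 2 ∂μ = 1)
    (a b c d : Fin p) :
    Integrable (fun ω => ξ a ω * ξ b ω * ξ c ω * ξ d ω) μ ∧
    ∫ ω, ξ a ω * ξ b ω * ξ c ω * ξ d ω ∂μ =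
      (if a = b ∧ c = d ∧ a = c then ∫ ω, ξ a ω ^ 4 ∂μ else 0)
    + (if a = b ∧ c = d ∧ a ≠ c then 1 else 0)
    + (if a = c ∧ b = d ∧ a ≠ b then 1 else 0)
    + (if a = d ∧ b = c ∧ a ≠ b then 1 else 0) := by
  classical
  set cnt : Fin p → ℕ := fun i =>
    (if a = i then 1 else 0) + (if b = i then 1 else 0)
    + (if c = i then 1 else 0) + (if d = i then 1 else 0) with hcnt
  have hcnt4 : ∀ i, cnt i ≤ 4 := by
    intro i; simp only [hcnt]; split_ifs <;> norm_num
  have hpt : ∀ ω, ξ a ω * ξ b ω * ξ c ω * ξ d ω = ∏ i, ξ i ω ^ cnt i := by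
    intro ω
    simp only [hcnt, pow_add, Finset.prod_mul_distrib]
    simp [pow_ite, Finset.prod_ite_eq]
  have hindep' : iIndepFun (fun i => fun ω => ξ i ω ^ cnt i) μ :=
    hindep.comp (fun i (x : ℝ) => x ^ cnt i) (fun i => measurable_id.pow_const _)
  obtain ⟨hI, hE⟩ := my_prod_int hindep' (fun i => (hmeas i).pow_const _)
    (fun i => my_int_pow (hmeas i) (hint i) (hcnt4 i)) Finset.univ
  have hfun : (fun ω => ξ a ω * ξ b ω * ξ c ω * ξ d ω)
      = fun ω => ∏ i, ξ i ω ^ cnt i := funext hpt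
  refine ⟨hfun ▸ hI, ?_⟩
  have hcalc : ∫ ω, ξ a ω * ξ b ω * ξ c ω * ξ d ω ∂μ
      = ∏ i, ∫ ω, ξ i ω ^ cnt i ∂μ := by rw [hfun]; exact hE
  rw [hcalc]
  have hzero : ∀ j : Fin p, cnt j = 1 → (∏ i, ∫ ω, ξ i ω ^ cnt i ∂μ) = 0 := by
    intro j hj
    refine Finset.prod_eq_zero (Finset.mem_univ j) ?_
    rw [hj]; simpa using hmean j
  have hone : ∀ i : Fin p, cnt i = 0 → (∫ ω, ξ i ω ^ cnt i ∂μ) = 1 := by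
    intro i hi; rw [hi]; simp
  have htwo : ∀ i : Fin p, cnt i = 2 → (∫ ω, ξ i ω ^ cnt i ∂μ) = 1 := by
    intro i hi; rw [hi]; exact hvar i
  by_cases hab : a = b
  · subst hab
    by_cases hcd : c = d
    · subst hcd
      by_cases hac : a = c
      · subst hac
        have hF : ∀ i : Fin p, (∫ ω, ξ i ω ^ cnt i ∂μ)
            = if a = i then ∫ ω, ξ i ω ^ (4:ℕ) ∂μ else 1 := by
          intro i
          by_cases h : a = i
          · rw [if_pos h]
            have : cnt i = 4 := by simp [hcnt, h]
            rw [this]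
          · rw [if_neg h]
            exact hone i (by simp [hcnt, h])
        rw [Finset.prod_congr rfl (fun i _ => hF i), Finset.prod_ite_eq]
        simp
      · -- pairs (a,a),(c,c), a≠c
        rw [Finset.prod_eq_one ?_]
        · simp [hac]
        · intro i _
          by_cases h1 : a = i
          · exact htwo i (by simp [hcnt, ← h1, Ne.symm hac])
          · by_cases h2 : c = i
            · exact htwo i (by simp [hcnt, ← h2, hac])
            · exact hone i (by simp [hcnt, h1, h2])
    · -- a=b, c≠d : zero
      by_cases hac : a = c
      · have had : ¬ a = d := fun h => hcd (hac.symm.trans h)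
        rw [hzero d (by simp [hcnt, had, hcd])]
        simp [hcd]
      · rw [hzero c (by simp [hcnt, hac, Ne.symm hcd])]
        simp [hcd]
  · by_cases hcd : c = d
    · subst hcd
      have h3 : ¬(a = c ∧ b = c) := fun h => hab (h.1.trans h.2.symm)
      by_cases hac : a = c
      · have hcb : ¬ c = b := fun h => hab (hac.trans h)
        rw [hzero b (by simp [hcnt, hab, hcb])]
        simp [hab, h3]
      · rw [hzero a (by simp [hcnt, Ne.symm hab, Ne.symm hac])]
        simp [hab, h3]
    · by_cases hac : a = c
      · by_cases hbd : b = d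
        · -- pairs (a,c),(b,d)
          subst hac; subst hbd
          rw [Finset.prod_eq_one ?_]
          · simp [hab, hcd]
          · intro i _
            by_cases h1 : a = i
            · have hbi : ¬ b = i := fun h => hab (h1.trans h.symm)
              exact htwo i (by simp [hcnt, ← h1, Ne.symm hab, hbi])
            · by_cases h2 : b = i
              · exact htwo i (by simp [hcnt, ← h2, hab, h1])
              · exact hone i (by simp [hcnt, h1, h2])
        · have hbc : ¬ b = c := fun h => hab (hac.trans h.symm)
          have hcb : ¬ c = b := fun h => hbc h.symm
          have hdb : ¬ d = b := fun h => hbd h.symm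
          rw [hzero b (by simp [hcnt, hab, hcb, hdb])]
          simp [hab, hbd, hbc]
      · by_cases had : a = d
        · by_cases hbc : b = c
          · subst had; subst hbc
            rw [Finset.prod_eq_one ?_]
            · simp [hab, hac, hcd]
            · intro i _
              by_cases h1 : a = i
              · have hbi : ¬ b = i := fun h => hab (h1.trans h.symm)
                exact htwo i (by simp [hcnt, ← h1, Ne.symm hab, hbi])
              · by_cases h2 : b = i
                · exact htwo i (by simp [hcnt, ← h2, hab, h1])
                · exact hone i (by simp [hcnt, h1, h2])
          · have hcb : ¬ c = b := fun h => hbc h.symm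
            have hdb : ¬ d = b := fun h => hab (had.trans h)
            rw [hzero b (by simp [hcnt, hab, hcb, hdb])]
            simp [hab, hac, hbc]
        · rw [hzero a (by simp [hcnt, Ne.symm hab, Ne.symm hac, Ne.symm had])]
          simp [hab, hac, had]

lemma my_offdiag {p : ℕ} (g : Fin p → Fin p → ℝ) :
    ∑ a, ∑ c, (if a = c then 0 else g a c) = (∑ a, ∑ c, g a c) - ∑ a, g a a := by
  rw [eq_sub_iff_add_eq, ← Finset.sum_add_distrib]
  refine Finset.sum_congr rfl fun a _ => ?_
  have h : ∀ c, g a c = (if a = c then 0 else g a c) + (if a = c then g a c else 0) := by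
    intro c; split_ifs <;> ring
  rw [Finset.sum_congr rfl (fun c (_ : c ∈ Finset.univ) => h c), Finset.sum_add_distrib,
    Finset.sum_ite_eq]
  simp

lemma my_trace_sq {p : ℕ} (M : Matrix (Fin p) (Fin p) ℝ) :
    (Matrix.trace M) ^ 2 = ∑ a, ∑ c, M a a * M c c := by
  rw [Matrix.trace, pow_two, Finset.sum_mul_sum]
  rfl

lemma my_cross {p : ℕ} (M : Matrix (Fin p) (Fin p) ℝ) :
    ∑ a, ∑ b, M a b * M b a ≤ ∑ a, ∑ b, M a b * M a b := by
  have h3 : (∑ a, ∑ b, M b a * M b a) = ∑ a, ∑ b, M a b * M a b :=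
    Finset.sum_comm (f := fun x y => M y x * M y x)
  calc ∑ a, ∑ b, M a b * M b a
      ≤ ∑ a, ∑ b, (M a b * M a b + M b a * M b a) / 2 := by
        refine Finset.sum_le_sum fun a _ => Finset.sum_le_sum fun b _ => ?_
        nlinarith [sq_nonneg (M a b - M b a)]
    _ = (∑ a, ∑ b, M a b * M a b) / 2 + (∑ a, ∑ b, M b a * M b a) / 2 := by
        simp only [add_div, Finset.sum_add_distrib, Finset.sum_div]
    _ = ∑ a, ∑ b, M a b * M a b := by rw [h3]; ring

lemma my_diag_le {p : ℕ} (M : Matrix (Fin p) (Fin p) ℝ) :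
    ∑ a, M a a * M a a ≤ ∑ a, ∑ b, M a b * M a b := by
  refine Finset.sum_le_sum fun a _ => ?_
  exact Finset.single_le_sum (f := fun b => M a b * M a b)
    (fun b _ => mul_self_nonneg _) (Finset.mem_univ a)

theorem stmt_15 {Ω : Type*} [MeasurableSpace Ω] (μ : Measure Ω)
    [IsProbabilityMeasure μ] {p : ℕ} (ξ : Fin p → Ω → ℝ) (κ : ℝ)
    (hmeas : ∀ i, Measurable (ξ i))
    (hindep : iIndepFun ξ μ)
    (hint : ∀ i, Integrable (fun ω => ξ i ω ^ 4) μ)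
    (hmean : ∀ i, ∫ ω, ξ i ω ∂μ = 0)
    (hvar : ∀ i, ∫ ω, ξ i ω ^ 2 ∂μ = 1)
    (hfour : ∀ i, ∫ ω, ξ i ω ^ 4 ∂μ ≤ κ)
    (M : Matrix (Fin p) (Fin p) ℝ) :
    ∫ ω, (∑ j, ∑ l, M j l * ξ j ω * ξ l ω) ^ 2 ∂μ
      ≤ (κ + 2) * frobNorm M ^ 2 + Matrix.trace M ^ 2 := by
  classical
  rcases Nat.eq_zero_or_pos p with hp0 | hp
  · subst hp0
    simp [frobNorm, Matrix.trace]
  have hquad := my_quad hmeas hindep hint hmean hvar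
  set m4 : Fin p → ℝ := fun i => ∫ ω, ξ i ω ^ 4 ∂μ with hm4
  set T : Fin p → Fin p → Fin p → Fin p → ℝ := fun a b c d =>
      (if a = b ∧ c = d ∧ a = c then m4 a else 0)
    + (if a = b ∧ c = d ∧ a ≠ c then 1 else 0)
    + (if a = c ∧ b = d ∧ a ≠ b then 1 else 0)
    + (if a = d ∧ b = c ∧ a ≠ b then 1 else 0) with hT
  -- step 1: pointwise expansion
  have hS2 : ∀ ω, (∑ j, ∑ l, M j l * ξ j ω * ξ l ω) ^ 2
      = ∑ a, ∑ b, ∑ c, ∑ d, (M a b * M c d) * (ξ a ω * ξ b ω * ξ c ω * ξ d ω) := by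
    intro ω
    rw [pow_two]
    simp only [Finset.sum_mul, Finset.mul_sum]
    refine Finset.sum_congr rfl fun a _ => Finset.sum_congr rfl fun b _ =>
      Finset.sum_congr rfl fun c _ => Finset.sum_congr rfl fun d _ => by ring
  have hIq : ∀ a b c d : Fin p,
      Integrable (fun ω => (M a b * M c d) * (ξ a ω * ξ b ω * ξ c ω * ξ d ω)) μ :=
    fun a b c d => ((hquad a b c d).1.const_mul _)
  have hstep2 : ∫ ω, (∑ j, ∑ l, M j l * ξ j ω * ξ l ω) ^ 2 ∂μ
      = ∑ a, ∑ b, ∑ c, ∑ d, (M a b * M c d) * T a b c d := by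
    rw [show (fun ω => (∑ j, ∑ l, M j l * ξ j ω * ξ l ω) ^ 2)
        = fun ω => ∑ a, ∑ b, ∑ c, ∑ d, (M a b * M c d) * (ξ a ω * ξ b ω * ξ c ω * ξ d ω)
        from funext hS2]
    rw [integral_finset_sum _ (fun a _ => integrable_finset_sum _ (fun b _ =>
      integrable_finset_sum _ (fun c _ => integrable_finset_sum _ (fun d _ => hIq a b c d))))]
    refine Finset.sum_congr rfl fun a _ => ?_
    rw [integral_finset_sum _ (fun b _ => integrable_finset_sum _ (fun c _ =>
      integrable_finset_sum _ (fun d _ => hIq a b c d)))]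
    refine Finset.sum_congr rfl fun b _ => ?_
    rw [integral_finset_sum _ (fun c _ => integrable_finset_sum _ (fun d _ => hIq a b c d))]
    refine Finset.sum_congr rfl fun c _ => ?_
    rw [integral_finset_sum _ (fun d _ => hIq a b c d)]
    refine Finset.sum_congr rfl fun d _ => ?_
    rw [integral_const_mul, (hquad a b c d).2]
  rw [hstep2]
  -- step 3: collapse the sums
  have hsplit : ∑ a, ∑ b, ∑ c, ∑ d, (M a b * M c d) * T a b c d
      = (∑ a, M a a * M a a * m4 a)
      + (∑ a, ∑ c, if a = c then 0 else M a a * M c c)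
      + (∑ a, ∑ b, if a = b then 0 else M a b * M a b)
      + (∑ a, ∑ b, if a = b then 0 else M a b * M b a) := by
    simp only [hT, mul_add, Finset.sum_add_distrib]
    congr 1
    congr 1
    congr 1
    · simp [ite_and, mul_ite, Finset.sum_ite_irrel, Finset.sum_ite_eq, Finset.sum_ite_eq']
    · simp [ite_and, mul_ite, Finset.sum_ite_irrel, Finset.sum_ite_eq, Finset.sum_ite_eq',
        ite_not]
    · simp [ite_and, mul_ite, Finset.sum_ite_irrel, Finset.sum_ite_eq, Finset.sum_ite_eq',
        ite_not]
    · simp [ite_and, mul_ite, Finset.sum_ite_irrel, Finset.sum_ite_eq, Finset.sum_ite_eq',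
        ite_not]
  rw [hsplit, my_offdiag (fun a c => M a a * M c c), my_offdiag (fun a b => M a b * M a b),
    my_offdiag (fun a b => M a b * M b a)]
  have hfrob : frobNorm M ^ 2 = ∑ a, ∑ b, M a b * M a b := by
    rw [frobNorm, Real.sq_sqrt (by positivity)]
    exact Finset.sum_congr rfl fun a _ => Finset.sum_congr rfl fun b _ => (pow_two _)
  rw [hfrob, my_trace_sq]
  set D := ∑ a, M a a * M a a with hD
  set F2 := ∑ a, ∑ b, M a b * M a b with hF2
  set C := ∑ a, ∑ b, M a b * M b a with hC
  set t2 := ∑ a, ∑ c, M a a * M c c with ht2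
  have i0 : Fin p := ⟨0, hp⟩
  have hk0 : 0 ≤ κ := le_trans (integral_nonneg fun ω => by positivity) (hfour i0)
  set K := max (κ - 3) 0 with hK
  have hK0 : 0 ≤ K := le_max_right _ _
  have hKκ : K ≤ κ := max_le (by linarith) hk0
  have hm4K : ∀ a, m4 a ≤ K + 3 := fun a =>
    le_trans (hfour a) (by have := le_max_left (κ - 3) 0; linarith)
  have hdiag : ∑ a, M a a * M a a * m4 a ≤ (K + 3) * D := by
    calc ∑ a, M a a * M a a * m4 a ≤ ∑ a, M a a * M a a * (K + 3) :=
          Finset.sum_le_sum fun a _ =>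
            mul_le_mul_of_nonneg_left (hm4K a) (mul_self_nonneg _)
      _ = (K + 3) * D := by rw [hD, ← Finset.sum_mul]; ring
  have hDF : D ≤ F2 := my_diag_le M
  have hCF : C ≤ F2 := my_cross M
  have hF20 : 0 ≤ F2 := Finset.sum_nonneg fun a _ => Finset.sum_nonneg fun b _ =>
    mul_self_nonneg _
  have hKD : K * D ≤ K * F2 := mul_le_mul_of_nonneg_left hDF hK0
  have hKF : K * F2 ≤ κ * F2 := mul_le_mul_of_nonneg_right hKκ hF20
  have hexp : (K + 3) * D = K * D + 3 * D := by ring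
  linarith
end
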